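/- For all γ₁, γ₂ > 0, the Kullback–Leibler divergence between the scale Cauchy densities p_{γ₁} and p_{γ₂} is KL(p_{γ₁} : p_{γ₂}) = ∫_ℝ p_{γ₁}(x) log( p_{γ₁}(x) / p_{γ₂}(x) ) dx = 2 log( (γ₁ + γ₂) / (2√(γ₁γ₂)) ). In particular, this divergence is symmetric in γ₁ and γ₂ and is nonnegative since the arithmetic mean of γ₁ and γ₂ dominates their geometric mean. -/

import Mathlib

open MeasureTheory Real Set Filter

-- basic integral: ∫ (γ²+x²)⁻¹ = π/γ
lemma integrable_inv_sq_add_sq {γ : ℝ} (hγ : 0 < γ) :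
    Integrable fun x : ℝ => (γ ^ 2 + x ^ 2)⁻¹ := by
  have h : Integrable fun x : ℝ => γ⁻¹^2 * (1 + (γ⁻¹ * x) ^ 2)⁻¹ :=
    ((integrable_inv_one_add_sq.comp_mul_left' (R := γ⁻¹) (by positivity)).const_mul _)
  refine h.congr (Eventually.of_forall fun x => ?_)
  field_simp

lemma integral_inv_sq_add_sq' {γ : ℝ} (hγ : 0 < γ) :
    ∫ x : ℝ, (γ ^ 2 + x ^ 2)⁻¹ = π / γ := by
  have h := MeasureTheory.Measure.integral_comp_mul_left (fun y : ℝ => (1 + y ^ 2)⁻¹) γ⁻¹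
  rw [integral_univ_inv_one_add_sq] at h
  have : ∀ x : ℝ, (γ ^ 2 + x ^ 2)⁻¹ = γ⁻¹^2 * (1 + (γ⁻¹ * x) ^ 2)⁻¹ := by
    intro x; field_simp
  rw [show (fun x : ℝ => (γ ^ 2 + x ^ 2)⁻¹) = fun x : ℝ => γ⁻¹^2 * (1 + (γ⁻¹ * x) ^ 2)⁻¹ from funext this]
  rw [MeasureTheory.integral_const_mul, h]
  rw [abs_of_pos (by positivity)]
  field_simp
  ring

lemma continuous_aux {γ : ℝ} (hγ : 0 < γ) :
    Continuous fun x : ℝ => Real.sqrt |x| / (γ ^ 2 + x ^ 2) := by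
  apply Continuous.div
  · exact continuous_abs.sqrt
  · fun_prop
  · intro x; positivity

lemma integrable_sqrt_div {γ : ℝ} (hγ : 0 < γ) :
    Integrable fun x : ℝ => Real.sqrt |x| / (γ ^ 2 + x ^ 2) := by
  set f : ℝ → ℝ := fun x => Real.sqrt |x| / (γ ^ 2 + x ^ 2) with hf
  have hc : Continuous f := continuous_aux hγ
  have h1 : IntegrableOn f (Ioi 1) := by
    refine Integrable.mono' (g := fun x => x ^ (-(3:ℝ)/2)) ?_ hc.aestronglyMeasurable.restrict ?_
    · have := integrableOn_Ioi_rpow_of_lt (a := -(3:ℝ)/2) (by norm_num) (c := 1) one_pos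
      exact this
    · filter_upwards [ae_restrict_mem measurableSet_Ioi] with x hx
      have hx1 : (1:ℝ) ≤ x := le_of_lt hx
      have hx0 : (0:ℝ) < x := lt_of_lt_of_le one_pos hx1
      rw [Real.norm_eq_abs, abs_of_nonneg (by positivity)]
      have h2 : Real.sqrt |x| = x ^ ((1:ℝ)/2) := by
        rw [abs_of_pos hx0, Real.sqrt_eq_rpow]
      rw [hf]
      simp only
      rw [h2]
      have hden : x ^ 2 ≤ γ ^ 2 + x ^ 2 := by nlinarith [sq_nonneg γ]
      have : x ^ ((1:ℝ)/2) / (γ ^ 2 + x ^ 2) ≤ x ^ ((1:ℝ)/2) / x ^ 2 := by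
        apply div_le_div_of_nonneg_left (by positivity) (by positivity) hden
      refine this.trans (le_of_eq ?_)
      rw [← Real.rpow_two, ← Real.rpow_sub hx0]
      norm_num
  have h2 : IntegrableOn f (Icc (-1 : ℝ) 1) := hc.integrableOn_Icc
  have heven : (f ∘ fun x : ℝ => -x) = f := by
    funext x; simp [hf, neg_pow]
  have h3 : IntegrableOn f (Iio (-1 : ℝ)) := by
    have A : MeasurableEmbedding fun x : ℝ => -x :=
      (Homeomorph.neg ℝ).isClosedEmbedding.measurableEmbedding
    have := A.integrableOn_map_iff (f := f) (s := Iio (-1 : ℝ)) (μ := volume)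
    rw [Measure.map_neg_eq_self (volume : Measure ℝ)] at this
    rw [this, heven]
    have hpre : (fun x : ℝ => -x) ⁻¹' (Iio (-1 : ℝ)) = Ioi 1 := by
      ext x; simp
    rw [hpre]
    exact h1
  have huniv : (univ : Set ℝ) ⊆ Iio (-1 : ℝ) ∪ (Icc (-1 : ℝ) 1 ∪ Ioi 1) := by
    intro x _
    rcases lt_or_ge x (-1 : ℝ) with h | h
    · exact Or.inl h
    · rcases le_or_gt x 1 with h' | h'
      · exact Or.inr (Or.inl ⟨h, h'⟩)
      · exact Or.inr (Or.inr h')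
  rw [← integrableOn_univ]
  exact ((h3.union (h2.union h1)).mono_set huniv)

lemma log_abs_bound {a : ℝ} (ha : 0 < a) (x : ℝ) :
    |Real.log (a ^ 2 + x ^ 2)| ≤ |Real.log (a ^ 2)| + (4 / Real.sqrt a) * Real.sqrt |x| := by
  have ha2 : (0:ℝ) < a ^ 2 := by positivity
  have hpos : (0:ℝ) < a ^ 2 + x ^ 2 := by positivity
  have hlow : Real.log (a ^ 2) ≤ Real.log (a ^ 2 + x ^ 2) :=
    Real.log_le_log ha2 (by nlinarith [sq_nonneg x])
  set t : ℝ := x ^ 2 / a ^ 2 with htdef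
  have ht : 0 ≤ t := by positivity
  -- log(1+t) ≤ 4 t^{1/4}
  have key : Real.log (1 + t) ≤ 4 * Real.sqrt (Real.sqrt t) := by
    have h1t : (0:ℝ) < 1 + t := by linarith
    have hs : (0:ℝ) < Real.sqrt (Real.sqrt (1 + t)) := by positivity
    have e1 : Real.log (1 + t) = 4 * Real.log (Real.sqrt (Real.sqrt (1 + t))) := by
      rw [Real.log_sqrt (Real.sqrt_nonneg _), Real.log_sqrt h1t.le]; ring
    have e2 : Real.log (Real.sqrt (Real.sqrt (1 + t))) ≤ Real.sqrt (Real.sqrt (1 + t)) - 1 :=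
      Real.log_le_sub_one_of_pos hs
    have e3 : Real.sqrt (1 + t) ≤ 1 + Real.sqrt t := by
      rw [show (1:ℝ) + t = 1 + t from rfl]
      have := Real.sqrt_le_sqrt (show 1 + t ≤ (1 + Real.sqrt t)^2 by
        nlinarith [Real.sq_sqrt ht, Real.sqrt_nonneg t])
      calc Real.sqrt (1 + t) ≤ Real.sqrt ((1 + Real.sqrt t)^2) := this
        _ = 1 + Real.sqrt t := Real.sqrt_sq (by positivity)
    have e4 : Real.sqrt (Real.sqrt (1 + t)) ≤ 1 + Real.sqrt (Real.sqrt t) := by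
      calc Real.sqrt (Real.sqrt (1 + t)) ≤ Real.sqrt (1 + Real.sqrt t) :=
            Real.sqrt_le_sqrt e3
        _ ≤ Real.sqrt ((1 + Real.sqrt (Real.sqrt t))^2) := Real.sqrt_le_sqrt (by
            nlinarith [Real.sq_sqrt (Real.sqrt_nonneg t), Real.sqrt_nonneg (Real.sqrt t)])
        _ = 1 + Real.sqrt (Real.sqrt t) := Real.sqrt_sq (by positivity)
    calc Real.log (1 + t) = 4 * Real.log (Real.sqrt (Real.sqrt (1 + t))) := e1
      _ ≤ 4 * (Real.sqrt (Real.sqrt (1 + t)) - 1) := by linarith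
      _ ≤ 4 * Real.sqrt (Real.sqrt t) := by linarith
  have hssqt : Real.sqrt (Real.sqrt t) = Real.sqrt |x| / Real.sqrt (Real.sqrt (a^2)) := by
    rw [htdef, Real.sqrt_div' _ (by positivity), Real.sqrt_sq_eq_abs,
      Real.sqrt_div (abs_nonneg x)]
  have hsa : Real.sqrt (Real.sqrt (a ^ 2)) = Real.sqrt a := by
    rw [Real.sqrt_sq ha.le]
  have hup : Real.log (a ^ 2 + x ^ 2) ≤ Real.log (a ^ 2) + (4 / Real.sqrt a) * Real.sqrt |x| := by
    have : a ^ 2 + x ^ 2 = a ^ 2 * (1 + t) := by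
      rw [htdef]; field_simp
    rw [this, Real.log_mul (ne_of_gt ha2) (by positivity)]
    have := key
    rw [hssqt, hsa] at this
    have hsqa : 0 < Real.sqrt a := Real.sqrt_pos.mpr ha
    calc Real.log (a^2) + Real.log (1+t) ≤ Real.log (a^2) + 4 * (Real.sqrt |x| / Real.sqrt a) := by
          linarith
      _ = Real.log (a^2) + (4 / Real.sqrt a) * Real.sqrt |x| := by ring
  have hnn : 0 ≤ (4 / Real.sqrt a) * Real.sqrt |x| := by positivity
  rw [abs_le]
  constructor
  · have : -(|Real.log (a ^ 2)|) ≤ Real.log (a ^ 2) := neg_abs_le _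
    linarith [hlow]
  · have : Real.log (a ^ 2) ≤ |Real.log (a ^ 2)| := le_abs_self _
    linarith

lemma continuousOn_log_comp {a : ℝ} (ha : 0 < a) :
    Continuous fun x : ℝ => Real.log (a ^ 2 + x ^ 2) := by
  apply ContinuousOn.comp_continuous Real.continuousOn_log (by fun_prop)
  intro x
  simp only [Set.mem_compl_iff, Set.mem_singleton_iff]
  positivity

lemma continuous_log_div {γ a : ℝ} (hγ : 0 < γ) (ha : 0 < a) :
    Continuous fun x : ℝ => Real.log (a ^ 2 + x ^ 2) / (γ ^ 2 + x ^ 2) := by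
  apply Continuous.div (continuousOn_log_comp ha) (by fun_prop)
  intro x; positivity

lemma integrable_log_div {γ a : ℝ} (hγ : 0 < γ) (ha : 0 < a) :
    Integrable fun x : ℝ => Real.log (a ^ 2 + x ^ 2) / (γ ^ 2 + x ^ 2) := by
  refine Integrable.mono'
    (g := fun x => |Real.log (a ^ 2)| * (γ ^ 2 + x ^ 2)⁻¹
      + (4 / Real.sqrt a) * (Real.sqrt |x| / (γ ^ 2 + x ^ 2))) ?_ ?_ ?_
  · exact ((integrable_inv_sq_add_sq hγ).const_mul _).add
      ((integrable_sqrt_div hγ).const_mul _)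
  · exact (continuous_log_div hγ ha).aestronglyMeasurable
  · refine Eventually.of_forall fun x => ?_
    rw [Real.norm_eq_abs, abs_div, abs_of_pos (show (0:ℝ) < γ ^ 2 + x ^ 2 by positivity),
      div_le_iff₀ (by positivity)]
    have h := log_abs_bound ha x
    have hpos : (0:ℝ) < γ ^ 2 + x ^ 2 := by positivity
    have hexp : (|Real.log (a ^ 2)| * (γ ^ 2 + x ^ 2)⁻¹
        + 4 / Real.sqrt a * (Real.sqrt |x| / (γ ^ 2 + x ^ 2))) * (γ ^ 2 + x ^ 2)
        = |Real.log (a ^ 2)| + 4 / Real.sqrt a * Real.sqrt |x| := by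
      field_simp
    rw [hexp]
    exact h

lemma continuous_D_integrand {γ : ℝ} (hγ : 0 < γ) (a : ℝ) (ha : 0 < a) :
    Continuous fun x : ℝ => 2 * a / ((a ^ 2 + x ^ 2) * (γ ^ 2 + x ^ 2)) := by
  apply Continuous.div continuous_const (by fun_prop)
  intro x; positivity

lemma integrable_D_integrand {γ a : ℝ} (hγ : 0 < γ) (ha : 0 < a) :
    Integrable fun x : ℝ => 2 * a / ((a ^ 2 + x ^ 2) * (γ ^ 2 + x ^ 2)) := by
  refine Integrable.mono' (g := fun x => (2 / a) * (γ ^ 2 + x ^ 2)⁻¹)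
    ((integrable_inv_sq_add_sq hγ).const_mul _)
    (continuous_D_integrand hγ a ha).aestronglyMeasurable ?_
  refine Eventually.of_forall fun x => ?_
  have h1 : (0:ℝ) < a ^ 2 + x ^ 2 := by positivity
  have h2 : (0:ℝ) < γ ^ 2 + x ^ 2 := by positivity
  rw [Real.norm_eq_abs, abs_of_pos (by positivity)]
  rw [div_le_iff₀ (by positivity)]
  have he : 2 / a * (γ ^ 2 + x ^ 2)⁻¹ * ((a ^ 2 + x ^ 2) * (γ ^ 2 + x ^ 2))
      = 2 / a * (a ^ 2 + x ^ 2) := by field_simp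
  rw [he, div_mul_eq_mul_div, le_div_iff₀ ha]
  nlinarith [sq_nonneg x]

lemma hasDerivAt_K {γ : ℝ} (hγ : 0 < γ) {a₀ : ℝ} (ha₀ : 0 < a₀) :
    HasDerivAt (fun a => ∫ x : ℝ, Real.log (a ^ 2 + x ^ 2) / (γ ^ 2 + x ^ 2))
      (∫ x : ℝ, 2 * a₀ / ((a₀ ^ 2 + x ^ 2) * (γ ^ 2 + x ^ 2))) a₀ := by
  have hball : ∀ a ∈ Metric.ball a₀ (a₀ / 2), a₀ / 2 < a ∧ 0 < a := by
    intro a ha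
    rw [Metric.mem_ball, Real.dist_eq, abs_lt] at ha
    constructor <;> linarith
  have main := hasDerivAt_integral_of_dominated_loc_of_deriv_le
    (F := fun a x => Real.log (a ^ 2 + x ^ 2) / (γ ^ 2 + x ^ 2))
    (F' := fun a x => 2 * a / ((a ^ 2 + x ^ 2) * (γ ^ 2 + x ^ 2)))
    (x₀ := a₀) (bound := fun x => (4 / a₀) * (γ ^ 2 + x ^ 2)⁻¹)
    (μ := volume) (Metric.ball_mem_nhds a₀ (half_pos ha₀))
    ?_ (integrable_log_div hγ ha₀) ?_ ?_
    (((integrable_inv_sq_add_sq hγ).const_mul _)) ?_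
  · exact main.2
  · refine Eventually.of_forall fun a => ?_
    exact ((Real.measurable_log.comp (by fun_prop)).div (by fun_prop)).aestronglyMeasurable
  · exact (continuous_D_integrand hγ a₀ ha₀).aestronglyMeasurable
  · refine Eventually.of_forall fun x => fun a ha => ?_
    obtain ⟨ha1, ha2⟩ := hball a ha
    have h1 : (0:ℝ) < a ^ 2 + x ^ 2 := by positivity
    have h2 : (0:ℝ) < γ ^ 2 + x ^ 2 := by positivity
    rw [Real.norm_eq_abs, abs_of_pos (by positivity)]
    have step1 : 2 * a / ((a ^ 2 + x ^ 2) * (γ ^ 2 + x ^ 2)) ≤ (2 / a) * (γ ^ 2 + x ^ 2)⁻¹ := by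
      rw [div_le_iff₀ (by positivity)]
      have he : 2 / a * (γ ^ 2 + x ^ 2)⁻¹ * ((a ^ 2 + x ^ 2) * (γ ^ 2 + x ^ 2))
          = 2 / a * (a ^ 2 + x ^ 2) := by field_simp
      rw [he, div_mul_eq_mul_div, le_div_iff₀ ha2]
      nlinarith [sq_nonneg x]
    refine step1.trans ?_
    have : 2 / a ≤ 4 / a₀ := by
      rw [div_le_div_iff₀ ha2 ha₀]
      nlinarith
    exact mul_le_mul_of_nonneg_right this (by positivity)
  · refine Eventually.of_forall fun x => fun a ha => ?_
    obtain ⟨_, ha2⟩ := hball a ha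
    have h1 : (0:ℝ) < a ^ 2 + x ^ 2 := by positivity
    have hd : HasDerivAt (fun a : ℝ => a ^ 2 + x ^ 2) (2 * a) a := by
      simpa using (hasDerivAt_pow 2 a).add_const (x ^ 2)
    have := (hd.log (ne_of_gt h1)).div_const (γ ^ 2 + x ^ 2)
    exact this.congr_deriv (div_div _ _ _)

lemma eval_D_ne {γ a : ℝ} (hγ : 0 < γ) (ha : 0 < a) (hne : a ≠ γ) :
    ∫ x : ℝ, 2 * a / ((a ^ 2 + x ^ 2) * (γ ^ 2 + x ^ 2)) = 2 * π / (γ * (a + γ)) := by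
  have hsq : a ^ 2 - γ ^ 2 ≠ 0 := by
    intro h
    have : (a - γ) * (a + γ) = 0 := by ring_nf; linarith [h]
    rcases mul_eq_zero.mp this with h' | h'
    · exact hne (by linarith)
    · linarith
  have key : ∀ x : ℝ, 2 * a / ((a ^ 2 + x ^ 2) * (γ ^ 2 + x ^ 2))
      = (2 * a / (a ^ 2 - γ ^ 2)) * ((γ ^ 2 + x ^ 2)⁻¹ - (a ^ 2 + x ^ 2)⁻¹) := by
    intro x
    have h1 : (0:ℝ) < a ^ 2 + x ^ 2 := by positivity
    have h2 : (0:ℝ) < γ ^ 2 + x ^ 2 := by positivity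
    field_simp
    ring
  rw [show (fun x : ℝ => 2 * a / ((a ^ 2 + x ^ 2) * (γ ^ 2 + x ^ 2)))
      = fun x : ℝ => (2 * a / (a ^ 2 - γ ^ 2)) * ((γ ^ 2 + x ^ 2)⁻¹ - (a ^ 2 + x ^ 2)⁻¹)
      from funext key]
  rw [MeasureTheory.integral_const_mul,
    MeasureTheory.integral_sub (integrable_inv_sq_add_sq hγ) (integrable_inv_sq_add_sq ha),
    integral_inv_sq_add_sq' hγ, integral_inv_sq_add_sq' ha]
  field_simp
  ring

lemma eval_D {γ a : ℝ} (hγ : 0 < γ) (ha : 0 < a) :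
    ∫ x : ℝ, 2 * a / ((a ^ 2 + x ^ 2) * (γ ^ 2 + x ^ 2)) = 2 * π / (γ * (a + γ)) := by
  rcases ne_or_eq a γ with hne | heq
  · exact eval_D_ne hγ ha hne
  subst heq
  set D : ℝ → ℝ := fun b => ∫ x : ℝ, 2 * b / ((b ^ 2 + x ^ 2) * (a ^ 2 + x ^ 2)) with hD
  have hcont : ContinuousAt D a := by
    refine MeasureTheory.continuousAt_of_dominated
      (bound := fun x => (4 / a) * (a ^ 2 + x ^ 2)⁻¹) ?_ ?_
      ((integrable_inv_sq_add_sq ha).const_mul _) ?_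
    · refine Eventually.of_forall fun b => ?_
      exact (Measurable.div (by fun_prop) (by fun_prop)).aestronglyMeasurable
    · filter_upwards [Metric.ball_mem_nhds a (half_pos ha)] with b hb
      refine Eventually.of_forall fun x => ?_
      have hb' : a / 2 < b ∧ 0 < b := by
        rw [Metric.mem_ball, Real.dist_eq, abs_lt] at hb
        constructor <;> linarith
      obtain ⟨hb1, hb2⟩ := hb'
      have h1 : (0:ℝ) < b ^ 2 + x ^ 2 := by positivity
      have h2 : (0:ℝ) < a ^ 2 + x ^ 2 := by positivity
      rw [Real.norm_eq_abs, abs_of_pos (by positivity)]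
      have step1 : 2 * b / ((b ^ 2 + x ^ 2) * (a ^ 2 + x ^ 2)) ≤ (2 / b) * (a ^ 2 + x ^ 2)⁻¹ := by
        rw [div_le_iff₀ (by positivity)]
        have he : 2 / b * (a ^ 2 + x ^ 2)⁻¹ * ((b ^ 2 + x ^ 2) * (a ^ 2 + x ^ 2))
            = 2 / b * (b ^ 2 + x ^ 2) := by field_simp
        rw [he, div_mul_eq_mul_div, le_div_iff₀ hb2]
        nlinarith [sq_nonneg x]
      refine step1.trans ?_
      have : 2 / b ≤ 4 / a := by
        rw [div_le_div_iff₀ hb2 ha]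
        nlinarith
      exact mul_le_mul_of_nonneg_right this (by positivity)
    · refine Eventually.of_forall fun x => ?_
      have h2 : ∀ b : ℝ, b ∈ Metric.ball a (a/2) → (0:ℝ) < (b ^ 2 + x ^ 2) * (a ^ 2 + x ^ 2) := by
        intro b hb
        rw [Metric.mem_ball, Real.dist_eq, abs_lt] at hb
        have : 0 < b := by linarith
        positivity
      apply ContinuousAt.div (by fun_prop) (by fun_prop)
      exact ne_of_gt (h2 a (Metric.mem_ball_self (half_pos ha)))
  have h1 : Tendsto D (nhdsWithin a {a}ᶜ) (nhds (D a)) :=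
    hcont.continuousWithinAt.tendsto
  have h2 : Tendsto D (nhdsWithin a {a}ᶜ) (nhds (2 * π / (a * (a + a)))) := by
    have hev : ∀ᶠ b in nhdsWithin a {a}ᶜ, D b = 2 * π / (a * (b + a)) := by
      filter_upwards [self_mem_nhdsWithin,
        eventually_nhdsWithin_of_eventually_nhds (eventually_gt_nhds ha)] with b hb hb'
      exact eval_D_ne ha hb' hb
    have hcont2 : Tendsto (fun b => 2 * π / (a * (b + a))) (nhdsWithin a {a}ᶜ)
        (nhds (2 * π / (a * (a + a)))) := by
      apply Tendsto.mono_left ?_ nhdsWithin_le_nhds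
      apply (ContinuousAt.div continuousAt_const (by fun_prop) ?_).tendsto
      have : (0:ℝ) < a * (a + a) := by positivity
      exact ne_of_gt this
    exact Tendsto.congr' (hev.mono fun b hb => hb.symm) hcont2
  exact tendsto_nhds_unique h1 h2

lemma K_eval {γ : ℝ} (hγ : 0 < γ) : ∀ a : ℝ, 0 < a →
    ∫ x : ℝ, Real.log (a ^ 2 + x ^ 2) / (γ ^ 2 + x ^ 2) = (2 * π / γ) * Real.log (γ + a) := by
  set F : ℝ → ℝ := fun a =>
    (∫ x : ℝ, Real.log (a ^ 2 + x ^ 2) / (γ ^ 2 + x ^ 2)) - (2 * π / γ) * Real.log (γ + a)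
    with hF
  have hderiv : ∀ a : ℝ, 0 < a → HasDerivAt F 0 a := by
    intro a ha
    have hK := (hasDerivAt_K hγ ha)
    rw [eval_D hγ ha] at hK
    have hlog : HasDerivAt (fun a : ℝ => (2 * π / γ) * Real.log (γ + a))
        ((2 * π / γ) * (γ + a)⁻¹) a := by
      have h1 : HasDerivAt (fun a : ℝ => γ + a) 1 a := (hasDerivAt_id a).const_add γ
      have h2 := h1.log (by positivity)
      simpa using h2.const_mul (2 * π / γ)
    have := hK.sub hlog
    refine this.congr_deriv ?_
    have : (0:ℝ) < γ + a := by positivity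
    rw [add_comm a γ, ← div_div]
    ring
  have hconst : ∀ a b : ℝ, 0 < a → a ≤ b → F a = F b := by
    intro a b ha hab
    have hsub : Set.uIcc a b ⊆ Set.Ioi 0 := by
      rw [Set.uIcc_of_le hab]
      intro t ht
      exact lt_of_lt_of_le ha ht.1
    have := intervalIntegral.integral_eq_sub_of_hasDerivAt
      (f := F) (f' := fun _ => (0:ℝ))
      (fun t ht => hderiv t (hsub ht)) (intervalIntegrable_const)
    simp only [intervalIntegral.integral_const, smul_zero] at this
    linarith [this]
  have hlim : Tendsto F atTop (nhds 0) := by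
    have hrep : ∀ a : ℝ, 0 < a → F a
        = ∫ x : ℝ, (Real.log (a ^ 2 + x ^ 2) - Real.log ((γ + a) ^ 2)) / (γ ^ 2 + x ^ 2) := by
      intro a ha
      have hgpa : (0:ℝ) < γ + a := by positivity
      have h2 : (2 * π / γ) * Real.log (γ + a)
          = ∫ x : ℝ, Real.log ((γ + a) ^ 2) * (γ ^ 2 + x ^ 2)⁻¹ := by
        rw [MeasureTheory.integral_const_mul, integral_inv_sq_add_sq' hγ,
          Real.log_pow]
        push_cast
        ring
      rw [hF]
      simp only
      rw [h2, ← MeasureTheory.integral_sub (integrable_log_div hγ ha)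
        ((integrable_inv_sq_add_sq hγ).const_mul _)]
      congr 1
      funext x
      have : (0:ℝ) < γ ^ 2 + x ^ 2 := by positivity
      field_simp
    have hmain : Tendsto (fun a : ℝ =>
        ∫ x : ℝ, (Real.log (a ^ 2 + x ^ 2) - Real.log ((γ + a) ^ 2)) / (γ ^ 2 + x ^ 2))
        atTop (nhds 0) := by
      have h0 : (0:ℝ) = ∫ x : ℝ, (0:ℝ) := by simp
      rw [h0]
      refine tendsto_integral_filter_of_dominated_convergence
        (bound := fun x => (Real.log 4 + (Real.log (γ ^ 2 + x ^ 2) - Real.log (γ ^ 2)))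
          / (γ ^ 2 + x ^ 2)) ?_ ?_ ?_ ?_
      · filter_upwards [eventually_ge_atTop γ] with a ha
        exact (((Real.measurable_log.comp (by fun_prop)).sub
          (Real.measurable_log.comp (by fun_prop))).div (by fun_prop)).aestronglyMeasurable
      · filter_upwards [eventually_ge_atTop γ] with a ha
        refine Eventually.of_forall fun x => ?_
        have hag : 0 < a := lt_of_lt_of_le hγ ha
        have hgpa : (0:ℝ) < γ + a := by positivity
        have hden : (0:ℝ) < γ ^ 2 + x ^ 2 := by positivity
        rw [Real.norm_eq_abs, abs_div, abs_of_pos hden, div_le_div_iff_of_pos_right hden]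
        -- upper and lower bounds on the log difference
        have hub : Real.log (a ^ 2 + x ^ 2) - Real.log ((γ + a) ^ 2)
            ≤ Real.log (γ ^ 2 + x ^ 2) - Real.log (γ ^ 2) := by
          have e1 : Real.log (a ^ 2 + x ^ 2) ≤ Real.log ((γ + a) ^ 2 + x ^ 2) :=
            Real.log_le_log (by positivity) (by nlinarith)
          have e2 : Real.log ((γ + a) ^ 2 + x ^ 2) - Real.log ((γ + a) ^ 2)
              = Real.log (1 + x ^ 2 / (γ + a) ^ 2) := by
            rw [← Real.log_div (by positivity) (by positivity)]
            congr 1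
            field_simp
          have e3 : Real.log (γ ^ 2 + x ^ 2) - Real.log (γ ^ 2)
              = Real.log (1 + x ^ 2 / γ ^ 2) := by
            rw [← Real.log_div (by positivity) (by positivity)]
            congr 1
            field_simp
          have e4 : Real.log (1 + x ^ 2 / (γ + a) ^ 2) ≤ Real.log (1 + x ^ 2 / γ ^ 2) := by
            apply Real.log_le_log (by positivity)
            have : x ^ 2 / (γ + a) ^ 2 ≤ x ^ 2 / γ ^ 2 := by
              apply div_le_div_of_nonneg_left (sq_nonneg x) (by positivity)
              nlinarith
            linarith
          linarith
        have hlb : -(Real.log 4) ≤ Real.log (a ^ 2 + x ^ 2) - Real.log ((γ + a) ^ 2) := by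
          have e1 : Real.log ((γ + a) ^ 2) ≤ Real.log (4 * a ^ 2) :=
            Real.log_le_log (by positivity) (by nlinarith)
          have e2 : Real.log (4 * a ^ 2) = Real.log 4 + Real.log (a ^ 2) := by
            rw [Real.log_mul (by norm_num) (by positivity)]
          have e3 : Real.log (a ^ 2) ≤ Real.log (a ^ 2 + x ^ 2) :=
            Real.log_le_log (by positivity) (by nlinarith)
          linarith
        have hnn1 : 0 ≤ Real.log (γ ^ 2 + x ^ 2) - Real.log (γ ^ 2) := by
          have := Real.log_le_log (show (0:ℝ) < γ ^ 2 by positivity)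
            (show γ ^ 2 ≤ γ ^ 2 + x ^ 2 by nlinarith)
          linarith
        have hnn2 : (0:ℝ) ≤ Real.log 4 := Real.log_nonneg (by norm_num)
        rw [abs_le]
        constructor <;> linarith
      · refine ((integrable_log_div hγ hγ).add
          ((integrable_inv_sq_add_sq hγ).const_mul (Real.log 4 - Real.log (γ ^ 2)))).congr
          (Eventually.of_forall fun x => ?_)
        have : (0:ℝ) < γ ^ 2 + x ^ 2 := by positivity
        simp only [Pi.add_apply]
        field_simp
        ring
      · refine Eventually.of_forall fun x => ?_
        have hlog : Tendsto (fun a : ℝ => Real.log (a ^ 2 + x ^ 2) - Real.log ((γ + a) ^ 2))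
            atTop (nhds 0) := by
          have hinfty : Tendsto (fun a : ℝ => γ + a) atTop atTop :=
            tendsto_atTop_add_const_left _ _ tendsto_id
          have hx : Tendsto (fun a : ℝ => x / (γ + a)) atTop (nhds 0) :=
            Tendsto.div_atTop tendsto_const_nhds hinfty
          have hg : Tendsto (fun a : ℝ => γ / (γ + a)) atTop (nhds 0) :=
            Tendsto.div_atTop tendsto_const_nhds hinfty
          have hratio : Tendsto (fun a : ℝ => (a ^ 2 + x ^ 2) / (γ + a) ^ 2) atTop (nhds 1) := by
            have heq : ∀ᶠ a : ℝ in atTop, (1 - γ / (γ + a)) ^ 2 + (x / (γ + a)) ^ 2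
                = (a ^ 2 + x ^ 2) / (γ + a) ^ 2 := by
              filter_upwards [eventually_gt_atTop 0] with a ha
              have : (0:ℝ) < γ + a := by positivity
              field_simp
              all_goals ring
            have hlim2 : Tendsto (fun a : ℝ => (1 - γ / (γ + a)) ^ 2 + (x / (γ + a)) ^ 2)
                atTop (nhds 1) := by
              have := ((tendsto_const_nhds (x := (1:ℝ)) (f := atTop)).sub hg).pow 2 |>.add
                (hx.pow 2)
              simpa using this
            exact Tendsto.congr' heq hlim2
          have hlog2 : Tendsto (fun a : ℝ => Real.log ((a ^ 2 + x ^ 2) / (γ + a) ^ 2))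
              atTop (nhds 0) := by
            have hcont := (Real.continuousAt_log one_ne_zero).tendsto
            rw [Real.log_one] at hcont
            exact hcont.comp hratio
          refine Tendsto.congr' ?_ hlog2
          filter_upwards [eventually_gt_atTop 0] with a ha
          rw [Real.log_div (by positivity) (by positivity)]
        simpa using hlog.div_const (γ ^ 2 + x ^ 2)
    refine Tendsto.congr' ?_ hmain
    filter_upwards [eventually_gt_atTop 0] with a ha
    exact (hrep a ha).symm
  intro a ha
  have hev : ∀ᶠ b in atTop, F b = F a := by
    filter_upwards [eventually_ge_atTop a] with b hb
    exact (hconst a b ha hb).symm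
  have h1 : Tendsto F atTop (nhds (F a)) :=
    Tendsto.congr' (hev.mono fun b hb => hb.symm) tendsto_const_nhds
  have : F a = 0 := tendsto_nhds_unique h1 hlim
  rw [hF] at this
  simp only at this
  linarith [this]

/-- The scale Cauchy density with scale `γ > 0`. -/
noncomputable def cauchyScale (γ : ℝ) (x : ℝ) : ℝ := γ / (Real.pi * (γ ^ 2 + x ^ 2))

lemma KL_formula {γ₁ γ₂ : ℝ} (h₁ : 0 < γ₁) (h₂ : 0 < γ₂) :
    ∫ x, cauchyScale γ₁ x * Real.log (cauchyScale γ₁ x / cauchyScale γ₂ x)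
      = 2 * Real.log (γ₁ + γ₂) - Real.log (4 * γ₁ * γ₂) := by
  have hπ : (0:ℝ) < π := Real.pi_pos
  have hpt : ∀ x : ℝ, cauchyScale γ₁ x * Real.log (cauchyScale γ₁ x / cauchyScale γ₂ x)
      = (γ₁ / π) * ((Real.log γ₁ - Real.log γ₂) * (γ₁ ^ 2 + x ^ 2)⁻¹)
        + ((γ₁ / π) * (Real.log (γ₂ ^ 2 + x ^ 2) / (γ₁ ^ 2 + x ^ 2))
          - (γ₁ / π) * (Real.log (γ₁ ^ 2 + x ^ 2) / (γ₁ ^ 2 + x ^ 2))) := by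
    intro x
    have hd1 : (0:ℝ) < γ₁ ^ 2 + x ^ 2 := by positivity
    have hd2 : (0:ℝ) < γ₂ ^ 2 + x ^ 2 := by positivity
    have hratio : cauchyScale γ₁ x / cauchyScale γ₂ x
        = (γ₁ / γ₂) * ((γ₂ ^ 2 + x ^ 2) / (γ₁ ^ 2 + x ^ 2)) := by
      unfold cauchyScale
      field_simp
    rw [hratio, Real.log_mul (by positivity) (by positivity),
      Real.log_div (ne_of_gt h₁) (ne_of_gt h₂),
      Real.log_div (ne_of_gt hd2) (ne_of_gt hd1)]
    unfold cauchyScale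
    field_simp
  rw [show (fun x => cauchyScale γ₁ x * Real.log (cauchyScale γ₁ x / cauchyScale γ₂ x))
      = fun x => (γ₁ / π) * ((Real.log γ₁ - Real.log γ₂) * (γ₁ ^ 2 + x ^ 2)⁻¹)
        + ((γ₁ / π) * (Real.log (γ₂ ^ 2 + x ^ 2) / (γ₁ ^ 2 + x ^ 2))
          - (γ₁ / π) * (Real.log (γ₁ ^ 2 + x ^ 2) / (γ₁ ^ 2 + x ^ 2)))
      from funext hpt]
  have i1 : Integrable fun x : ℝ => (γ₁ / π) * ((Real.log γ₁ - Real.log γ₂) * (γ₁ ^ 2 + x ^ 2)⁻¹) :=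
    ((integrable_inv_sq_add_sq h₁).const_mul _).const_mul _
  have i2 : Integrable fun x : ℝ => (γ₁ / π) * (Real.log (γ₂ ^ 2 + x ^ 2) / (γ₁ ^ 2 + x ^ 2)) :=
    (integrable_log_div h₁ h₂).const_mul _
  have i3 : Integrable fun x : ℝ => (γ₁ / π) * (Real.log (γ₁ ^ 2 + x ^ 2) / (γ₁ ^ 2 + x ^ 2)) :=
    (integrable_log_div h₁ h₁).const_mul _
  have hadd := MeasureTheory.integral_add i1 (i2.sub i3)
  simp only [Pi.add_apply, Pi.sub_apply] at hadd
  rw [hadd, MeasureTheory.integral_sub i2 i3]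
  rw [MeasureTheory.integral_const_mul, MeasureTheory.integral_const_mul,
    MeasureTheory.integral_const_mul, MeasureTheory.integral_const_mul,
    integral_inv_sq_add_sq' h₁, K_eval h₁ γ₂ h₂, K_eval h₁ γ₁ h₁]
  have e1 : Real.log (4 * γ₁ * γ₂) = 2 * Real.log 2 + Real.log γ₁ + Real.log γ₂ := by
    rw [Real.log_mul (by positivity) (ne_of_gt h₂), Real.log_mul (by norm_num) (ne_of_gt h₁),
      show (4:ℝ) = 2 ^ 2 by norm_num, Real.log_pow]
    push_cast
    ring
  have e2 : Real.log (γ₁ + γ₁) = Real.log 2 + Real.log γ₁ := by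
    rw [show γ₁ + γ₁ = 2 * γ₁ by ring, Real.log_mul (by norm_num) (ne_of_gt h₁)]
  rw [e1, e2]
  field_simp [ne_of_gt h₁, ne_of_gt h₂, ne_of_gt hπ]
  ring

lemma rhs_eq {γ₁ γ₂ : ℝ} (h₁ : 0 < γ₁) (h₂ : 0 < γ₂) :
    2 * Real.log ((γ₁ + γ₂) / (2 * Real.sqrt (γ₁ * γ₂)))
      = 2 * Real.log (γ₁ + γ₂) - Real.log (4 * γ₁ * γ₂) := by
  have hs : (0:ℝ) < Real.sqrt (γ₁ * γ₂) := Real.sqrt_pos.mpr (by positivity)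
  have h4 : Real.log 4 = 2 * Real.log 2 := by
    rw [show (4:ℝ) = 2 ^ 2 by norm_num, Real.log_pow]
    push_cast; ring
  rw [Real.log_div (by positivity) (by positivity),
    Real.log_mul (by norm_num : (2:ℝ) ≠ 0) (ne_of_gt hs), Real.log_sqrt (by positivity),
    Real.log_mul (mul_ne_zero (by norm_num : (4:ℝ) ≠ 0) (ne_of_gt h₁)) (ne_of_gt h₂),
    Real.log_mul (by norm_num : (4:ℝ) ≠ 0) (ne_of_gt h₁),
    Real.log_mul (ne_of_gt h₁) (ne_of_gt h₂), h4]
  ring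

/-- The KL divergence between scale Cauchy densities is
`2 log((γ₁+γ₂)/(2√(γ₁γ₂)))`; it is symmetric and nonnegative. -/
theorem KL_scale_cauchy
    (γ₁ γ₂ : ℝ) (h₁ : 0 < γ₁) (h₂ : 0 < γ₂) :
    (∫ x, cauchyScale γ₁ x * Real.log (cauchyScale γ₁ x / cauchyScale γ₂ x)
      = 2 * Real.log ((γ₁ + γ₂) / (2 * Real.sqrt (γ₁ * γ₂)))) ∧
    (∫ x, cauchyScale γ₁ x * Real.log (cauchyScale γ₁ x / cauchyScale γ₂ x)
      = ∫ x, cauchyScale γ₂ x * Real.log (cauchyScale γ₂ x / cauchyScale γ₁ x)) ∧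
    (0 ≤ ∫ x, cauchyScale γ₁ x * Real.log (cauchyScale γ₁ x / cauchyScale γ₂ x)) := by
  have k12 := KL_formula h₁ h₂
  have k21 := KL_formula h₂ h₁
  have main : ∫ x, cauchyScale γ₁ x * Real.log (cauchyScale γ₁ x / cauchyScale γ₂ x)
      = 2 * Real.log ((γ₁ + γ₂) / (2 * Real.sqrt (γ₁ * γ₂))) := by
    rw [k12, rhs_eq h₁ h₂]
  refine ⟨main, ?_, ?_⟩
  · rw [k12, k21]
    rw [show γ₂ + γ₁ = γ₁ + γ₂ by ring, show (4:ℝ) * γ₂ * γ₁ = 4 * γ₁ * γ₂ by ring]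
  · rw [k12]
    have h1 : Real.log (4 * γ₁ * γ₂) ≤ Real.log ((γ₁ + γ₂) ^ 2) :=
      Real.log_le_log (by positivity) (by nlinarith [sq_nonneg (γ₁ - γ₂)])
    rw [Real.log_pow] at h1
    push_cast at h1
    linarith
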